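/- For each j ≥ 1 and b_j = √(2j), the quasi-polynomials degenerate linearly: b_j · ĥ_j(x; b_j) + j · ĥ_{j-1}(x; b_j) = 0 identically in x. -/
import Mathlib

/-- Monic Hermite polynomials. -/
noncomputable def hermiteMonic (n : ℕ) : Polynomial ℝ :=
  ∑ j ∈ Finset.range (n / 2 + 1),
    Polynomial.C ((n.factorial : ℝ) / ((n - 2 * j).factorial * j.factorial) * (-(1:ℝ)/4) ^ j) *
      Polynomial.X ^ (n - 2 * j)

lemma coeff_hm (n k : ℕ) : (hermiteMonic n).coeff k =
    if k ≤ n ∧ (n - k) % 2 = 0 then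
      (n.factorial : ℝ) / ((k.factorial : ℝ) * (((n-k)/2).factorial : ℝ)) * (-(1:ℝ)/4) ^ ((n-k)/2)
    else 0 := by
  unfold hermiteMonic
  rw [Polynomial.finset_sum_coeff]
  simp only [Polynomial.coeff_C_mul, Polynomial.coeff_X_pow]
  split_ifs with h
  · rw [Finset.sum_eq_single ((n-k)/2)]
    · have h1 : n - 2 * ((n-k)/2) = k := by omega
      rw [if_pos h1.symm, mul_one, h1]
    · intro i hi hne
      simp only [Finset.mem_range] at hi
      have : ¬ (k = n - 2 * i) := by omega
      rw [if_neg this, mul_zero]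
    · intro hmem
      exact absurd (Finset.mem_range.mpr (by omega)) hmem
  · apply Finset.sum_eq_zero
    intro i hi
    simp only [Finset.mem_range] at hi
    have : ¬ (k = n - 2 * i) := by omega
    rw [if_neg this, mul_zero]

lemma hm_rec (n : ℕ) : hermiteMonic (n+2) =
    Polynomial.X * hermiteMonic (n+1) - Polynomial.C (((n:ℝ)+1)/2) * hermiteMonic n := by
  ext k
  rw [Polynomial.coeff_sub, Polynomial.coeff_C_mul]
  cases k with
  | zero =>
    rw [Polynomial.mul_coeff_zero, Polynomial.coeff_X_zero, zero_mul, zero_sub,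
      coeff_hm, coeff_hm]
    rcases Nat.even_or_odd n with he | ho
    · obtain ⟨m, hm⟩ := he
      have c1 : 0 ≤ n + 2 ∧ (n + 2 - 0) % 2 = 0 := by omega
      have c2 : 0 ≤ n ∧ (n - 0) % 2 = 0 := by omega
      rw [if_pos c1, if_pos c2]
      have e1 : (n + 2 - 0) / 2 = m + 1 := by omega
      have e2 : (n - 0) / 2 = m := by omega
      rw [e1, e2]
      have hn2 : n + 2 = (n + 1) + 1 := by omega
      rw [hn2, Nat.factorial_succ (n+1), Nat.factorial_succ n, Nat.factorial_succ m]
      have hb : ((n.factorial : ℝ)) ≠ 0 := by positivity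
      have hc : ((m.factorial : ℝ)) ≠ 0 := by positivity
      have hncast : ((n:ℝ)) = 2 * m := by rw [hm]; push_cast; ring
      push_cast
      rw [hncast]
      rw [pow_succ]
      field_simp
      ring
    · obtain ⟨m, hm⟩ := ho
      have c1 : ¬ (0 ≤ n + 2 ∧ (n + 2 - 0) % 2 = 0) := by omega
      have c2 : ¬ (0 ≤ n ∧ (n - 0) % 2 = 0) := by omega
      rw [if_neg c1, if_neg c2, mul_zero, neg_zero]
  | succ k =>
    rw [Polynomial.coeff_X_mul, coeff_hm, coeff_hm, coeff_hm]
    by_cases hc1 : k + 1 ≤ n + 2 ∧ (n + 2 - (k+1)) % 2 = 0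
    · have hc2 : k ≤ n + 1 ∧ (n + 1 - k) % 2 = 0 := by omega
      rw [if_pos hc1, if_pos hc2]
      by_cases hc3 : k + 1 ≤ n ∧ (n - (k+1)) % 2 = 0
      · rw [if_pos hc3]
        obtain ⟨e, he⟩ : ∃ e, (n + 1 - k) / 2 = e + 1 := ⟨(n+1-k)/2 - 1, by omega⟩
        have e1 : (n + 2 - (k+1)) / 2 = e + 1 := by omega
        have e2 : (n - (k+1)) / 2 = e := by omega
        have hne : n = k + 2 * e + 1 := by omega
        rw [e1, he, e2]
        have hn2 : n + 2 = (n + 1) + 1 := by omega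
        rw [hn2, Nat.factorial_succ (n+1), Nat.factorial_succ n, Nat.factorial_succ k,
          Nat.factorial_succ e]
        have ha : ((n.factorial : ℝ)) ≠ 0 := by positivity
        have hb : ((k.factorial : ℝ)) ≠ 0 := by positivity
        have hcc : ((e.factorial : ℝ)) ≠ 0 := by positivity
        have hncast : ((n:ℝ)) = k + 2 * e + 1 := by exact_mod_cast congrArg (Nat.cast (R := ℝ)) hne
        push_cast
        rw [hncast, pow_succ]
        field_simp
        ring
      · rw [if_neg hc3]
        have hk : k = n + 1 := by omega
        subst hk
        have e1 : (n + 2 - (n + 1 + 1)) / 2 = 0 := by omega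
        have e2 : (n + 1 - (n + 1)) / 2 = 0 := by omega
        rw [e1, e2]
        have h1 : ((n+2).factorial : ℝ) ≠ 0 := by positivity
        have h2 : ((n+1).factorial : ℝ) ≠ 0 := by positivity
        simp only [Nat.sub_self, Nat.factorial_zero, Nat.cast_one, mul_one, pow_zero,
          Nat.cast_ofNat, show n+1+1 = n+2 from rfl]
        rw [div_self h1, div_self h2]; ring
    · rw [if_neg hc1]
      have hc2 : ¬ (k ≤ n + 1 ∧ (n + 1 - k) % 2 = 0) := by omega
      have hc3 : ¬ (k + 1 ≤ n ∧ (n - (k+1)) % 2 = 0) := by omega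
      rw [if_neg hc2, if_neg hc3, mul_zero, sub_zero]

lemma hm0 : hermiteMonic 0 = Polynomial.C 1 := by
  simp [hermiteMonic]

lemma hm1 : hermiteMonic 1 = Polynomial.X := by
  simp [hermiteMonic]

/-- The quasi-polynomial ĥ_n(x;b). -/
noncomputable def hhat (b : ℝ) (n : ℕ) (x : ℝ) : ℝ :=
  (b ^ 2 - 2 * n) * (hermiteMonic n).eval x
    - (b * (hermiteMonic n).eval x + n * (hermiteMonic (n - 1)).eval x) / (x + b)

theorem quasi_poly_degeneration (j : ℕ) (hj : 1 ≤ j) (x : ℝ)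
    (hx : x ≠ -Real.sqrt (2 * j)) :
    Real.sqrt (2 * j) * hhat (Real.sqrt (2 * j)) j x
      + j * hhat (Real.sqrt (2 * j)) (j - 1) x = 0 := by
  set b := Real.sqrt (2 * j) with hbdef
  have hb2 : b ^ 2 = 2 * j := Real.sq_sqrt (by positivity)
  have hxb : x + b ≠ 0 := fun h => hx (by linarith)
  have hdiv : ∀ t : ℝ, (x + b) * (t / (x + b)) = t := fun t => by
    rw [mul_comm]; exact div_mul_cancel₀ t hxb
  match j, hj with
  | 1, _ =>
    have h0 : (hermiteMonic 0).eval x = 1 := by rw [hm0]; simp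
    simp only [hhat, show (1:ℕ)-1 = 0 from rfl, hm1, Polynomial.eval_X, h0,
      Nat.cast_one, Nat.cast_zero] at *
    field_simp
    linear_combination (b * x * (x + b) + b) * hb2
  | (m + 2), _ =>
    have hrec : (hermiteMonic (m+2)).eval x
        = x * (hermiteMonic (m+1)).eval x - ((m:ℝ)+1)/2 * (hermiteMonic m).eval x := by
      rw [hm_rec m]; simp
    set A := (hermiteMonic (m+2)).eval x
    set B := (hermiteMonic (m+1)).eval x
    set Cc := (hermiteMonic m).eval x
    have key : (x + b) * (b * hhat b (m+2) x + ((m:ℝ)+2) * hhat b (m+1) x) = 0 := by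
      have r1 := hdiv (b * A + ((m:ℝ)+2) * B)
      have r2 := hdiv (b * B + ((m:ℝ)+1) * Cc)
      simp only [hhat, show m+2-1 = m+1 from rfl, show m+1-1 = m from rfl]
      push_cast at hb2 ⊢
      linear_combination (-b) * r1 - ((m:ℝ)+2) * r2
        + (b * A * (x + b) + ((m:ℝ)+2) * B * (x + b) - A) * hb2
        - 2 * ((m:ℝ)+2) * hrec
    have h2 := (mul_eq_zero.mp key).resolve_left hxb
    push_cast
    convert h2 using 2
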